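/- Let q1 and q2 be conjunctive queries over the same schema S with the same tuple of answer variables. Then q1 is contained in q2 (i.e., for every S-database D, every answer to q1 on D is an answer to q2 on D) if and only if there exists a homomorphism from q2 to q1, that is, a function h from the variables of q2 to the variables of q1 that maps every relational atom of q2 to a relational atom of q1 and maps the answer variables of q2 to the corresponding answer variables of q1. -/

import Mathlib

/-- A relational schema: a collection of relation names with arities. -/
structure Schema : Type 1 where
  Rel : Type
  arity : Rel → ℕ

/-- A fact over schema `S` with constants from `C`. -/
def Fct (S : Schema) (C : Type) : Type := (R : S.Rel) × (Fin (S.arity R) → C)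

/-- Apply a function on constants to a fact. -/
def mapFct {S : Schema} {C D : Type} (h : C → D) (f : Fct S C) : Fct S D :=
  ⟨f.1, h ∘ f.2⟩

/-- A database over schema `S` with constants from `C`: a set of facts. -/
abbrev DB (S : Schema) (C : Type) : Type := Set (Fct S C)

/-- A conjunctive query over schema `S` with `n` answer variables. -/
structure CQ (S : Schema) (n : ℕ) : Type 1 where
  V : Type
  ansVar : Fin n → V
  atoms : DB S V

/-- `t` is an answer to the CQ `q` on the database `D`. -/
def cqAns {S : Schema} {n : ℕ} (q : CQ S n) {C : Type} (D : DB S C) (t : Fin n → C) : Prop :=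
  ∃ h : q.V → C, (∀ a ∈ q.atoms, mapFct h a ∈ D) ∧ h ∘ q.ansVar = t

/-- A (possibly infinitary) union of conjunctive queries. -/
abbrev UCQ (S : Schema) (n : ℕ) : Type 1 := Set (CQ S n)

/-- `t` is an answer to the UCQ `q` on the database `D`. -/
def ucqAns {S : Schema} {n : ℕ} (q : UCQ S n) {C : Type} (D : DB S C) (t : Fin n → C) : Prop :=
  ∃ p ∈ q, cqAns p D t

/-- Containment of UCQs over all databases of the schema. -/
def Contained {S : Schema} {n : ℕ} (q1 q2 : UCQ S n) : Prop :=
  ∀ (C : Type) (D : DB S C) (t : Fin n → C), ucqAns q1 D t → ucqAns q2 D t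

/-- A homomorphism from the CQ `q` to the CQ `p` (preserving atoms and answer variables). -/
def CQHom {S : Schema} {n : ℕ} (q p : CQ S n) : Prop :=
  ∃ h : q.V → p.V, (∀ a ∈ q.atoms, mapFct h a ∈ p.atoms) ∧ h ∘ q.ansVar = p.ansVar
theorem cq_containment_iff_hom (S : Schema) (n : ℕ) (q1 q2 : CQ S n) :
    (∀ (C : Type) (D : DB S C) (t : Fin n → C), cqAns q1 D t → cqAns q2 D t) ↔ CQHom q2 q1 := by
  constructor
  · intro H
    have h1 : cqAns q1 q1.atoms q1.ansVar :=
      ⟨id, fun a ha => by exact ha, rfl⟩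
    exact H q1.V q1.atoms q1.ansVar h1
  · rintro ⟨h, hat, hans⟩ C D t ⟨g, gat, gans⟩
    refine ⟨g ∘ h, fun a ha => ?_, ?_⟩
    · have := gat _ (hat a ha)
      exact this
    · rw [Function.comp_assoc, hans, gans]
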